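/- For 0 < α < π/2, the polar (azimuthal equidistant) projection from the spherical cap of angular radius α on the unit sphere S² to the plane — sending a point at spherical distance r and longitude θ from the center to the planar point with polar coordinates (r, θ) — is a bijection onto the disc of radius α that does not decrease distances and increases them by a factor of at most α/sin α; that is, it is a (1, α/sin α)-bi-Lipschitz map. -/

import Mathlib

open Real RealInnerProductSpace Set

set_option maxHeartbeats 1000000

/-- The intrinsic (spherical) distance between points of the unit sphere. -/
noncomputable def sphDist (p q : EuclideanSpace ℝ (Fin 3)) : ℝ :=
  Real.arccos ⟪p, q⟫

/-- The north pole `(0,0,1)`. -/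
noncomputable def northPole : EuclideanSpace ℝ (Fin 3) :=
  (WithLp.equiv 2 (Fin 3 → ℝ)).symm ![0, 0, 1]

/-- The azimuthal equidistant (polar) projection: a point at spherical distance `r`
and longitude `θ` from the north pole goes to the planar point with polar
coordinates `(r, θ)`. -/
noncomputable def polarProj (p : EuclideanSpace ℝ (Fin 3)) : EuclideanSpace ℝ (Fin 2) :=
  (sphDist p northPole / Real.sqrt (1 - ⟪p, northPole⟫ ^ 2)) •
    (WithLp.equiv 2 (Fin 2 → ℝ)).symm ![p 0, p 1]


lemma sin_star {a b : ℝ} (ha : 0 ≤ a) (hab : a ≤ b) (hb : b ≤ π) :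
    a * Real.sin b ≤ b * Real.sin a := by
  rcases eq_or_lt_of_le (ha.trans hab) with h | hb0
  · have : a = 0 := le_antisymm (h ▸ hab) ha
    simp [this, ← h]
  · have hw1 : (0:ℝ) ≤ 1 - a / b := by
      rw [sub_nonneg, div_le_one hb0]; exact hab
    have hw2 : (0:ℝ) ≤ a / b := by positivity
    have hsum : (1 - a/b) + a/b = 1 := by ring
    have h1 := strictConcaveOn_sin_Icc.concaveOn.2 (x := (0:ℝ)) (y := b)
      ⟨le_rfl, (ha.trans hab).trans hb⟩ ⟨ha.trans hab, hb⟩ hw1 hw2 hsum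
    simp only [smul_eq_mul, mul_zero, Real.sin_zero, zero_add, mul_zero, add_zero] at h1
    have h2 : a / b * b = a := div_mul_cancel₀ a hb0.ne'
    rw [h2] at h1
    calc a * Real.sin b = b * (a / b * Real.sin b) := by field_simp
      _ ≤ b * Real.sin a := by nlinarith [h1]

lemma hasDerivAt_cos_sqrt {x : ℝ} (hx : x ≠ 0) :
    HasDerivAt (fun t => Real.cos (Real.sqrt t))
      (-Real.sin (Real.sqrt x) * (1 / (2 * Real.sqrt x))) x :=
  (Real.hasDerivAt_cos (Real.sqrt x)).comp x (Real.hasDerivAt_sqrt hx)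

lemma convexOn_cos_sqrt : ConvexOn ℝ (Icc 0 (π^2)) (fun t => Real.cos (Real.sqrt t)) := by
  have hcont : ContinuousOn (fun t => Real.cos (Real.sqrt t)) (Icc 0 (π^2)) :=
    (Real.continuous_cos.comp Real.continuous_sqrt).continuousOn
  have hint : interior (Icc (0:ℝ) (π^2)) = Ioo 0 (π^2) := interior_Icc
  apply MonotoneOn.convexOn_of_deriv (convex_Icc _ _) hcont
  · rw [hint]
    intro x hx
    exact (hasDerivAt_cos_sqrt hx.1.ne').differentiableAt.differentiableWithinAt
  · rw [hint]
    intro x hx y hy hxy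
    rw [(hasDerivAt_cos_sqrt hx.1.ne').deriv, (hasDerivAt_cos_sqrt hy.1.ne').deriv]
    have hsx : 0 < Real.sqrt x := Real.sqrt_pos.2 hx.1
    have hsy : 0 < Real.sqrt y := Real.sqrt_pos.2 hy.1
    have hle : Real.sqrt x ≤ Real.sqrt y := Real.sqrt_le_sqrt hxy
    have hyπ : Real.sqrt y ≤ π := by
      rw [show π = Real.sqrt (π^2) by rw [Real.sqrt_sq Real.pi_pos.le]]
      exact Real.sqrt_le_sqrt hy.2.le
    have key := sin_star hsx.le hle hyπ
    rw [neg_mul, neg_mul, neg_le_neg_iff, mul_one_div, mul_one_div,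
      div_le_div_iff₀ (by positivity) (by positivity)]
    nlinarith [key]

lemma key_lower_cos {r s c : ℝ} (hr : 0 ≤ r) (hs : 0 ≤ s) (hrs : r + s ≤ π)
    (hc1 : -1 ≤ c) (hc2 : c ≤ 1) :
    Real.cos (Real.sqrt (r^2 + s^2 - 2*r*s*c)) ≤
      Real.cos r * Real.cos s + Real.sin r * Real.sin s * c := by
  set φ : ℝ → ℝ := fun c =>
    Real.cos r * Real.cos s + Real.sin r * Real.sin s * c
      - Real.cos (Real.sqrt (r^2 + s^2 - 2*r*s*c)) with hφ
  have harg : ∀ c, -1 ≤ c → c ≤ 1 → (r^2 + s^2 - 2*r*s*c) ∈ Icc (0:ℝ) (π^2) := by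
    intro c h1 h2
    constructor
    · nlinarith [sq_nonneg (r - s), mul_nonneg hr hs]
    · nlinarith [sq_nonneg (r + s), mul_nonneg hr hs]
  have hconc : ConcaveOn ℝ (Icc (-1:ℝ) 1) φ := by
    refine ⟨convex_Icc _ _, fun x hx y hy a b ha hb hab => ?_⟩
    have hxy : r^2 + s^2 - 2*r*s*(a*x + b*y)
        = a * (r^2 + s^2 - 2*r*s*x) + b * (r^2 + s^2 - 2*r*s*y) := by nlinarith [hab]
    have := convexOn_cos_sqrt.2 (harg x hx.1 hx.2) (harg y hy.1 hy.2) ha hb hab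
    simp only [smul_eq_mul, hφ, hxy]
    simp only [smul_eq_mul] at this
    have expand : a * (Real.cos r * Real.cos s + Real.sin r * Real.sin s * x
          - Real.cos (Real.sqrt (r^2 + s^2 - 2*r*s*x)))
        + b * (Real.cos r * Real.cos s + Real.sin r * Real.sin s * y
          - Real.cos (Real.sqrt (r^2 + s^2 - 2*r*s*y)))
        = (a + b) * (Real.cos r * Real.cos s)
          + Real.sin r * Real.sin s * (a*x + b*y)
          - (a * Real.cos (Real.sqrt (r^2 + s^2 - 2*r*s*x))
             + b * Real.cos (Real.sqrt (r^2 + s^2 - 2*r*s*y))) := by ring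
    rw [expand, hab, one_mul]
    linarith [this]
  have hm1 : φ (-1) = 0 := by
    have h1 : r^2 + s^2 - 2*r*s*(-1) = (r+s)^2 := by ring
    simp only [hφ, h1, Real.sqrt_sq (by linarith : (0:ℝ) ≤ r + s), Real.cos_add]
    ring
  have hp1 : φ 1 = 0 := by
    have h1 : r^2 + s^2 - 2*r*s*(1:ℝ) = (r-s)^2 := by ring
    have h2 : Real.sqrt ((r-s)^2) = |r - s| := Real.sqrt_sq_eq_abs _
    simp only [hφ, h1, h2, Real.cos_abs, Real.cos_sub]
    ring
  have hkey : 0 ≤ φ c := by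
    have h3 : c = ((1-c)/2) * (-1) + ((1+c)/2) * 1 := by ring
    have := hconc.2 (x := (-1:ℝ)) (y := (1:ℝ)) ⟨le_rfl, by norm_num⟩
      ⟨by norm_num, le_rfl⟩ (by linarith : (0:ℝ) ≤ (1-c)/2)
      (by linarith : (0:ℝ) ≤ (1+c)/2) (by ring)
    simp only [smul_eq_mul, hm1, hp1, mul_zero, add_zero] at this
    calc (0:ℝ) = ((1-c)/2) * φ (-1) + ((1+c)/2) * φ 1 := by rw [hm1, hp1]; ring
      _ ≤ φ (((1-c)/2) * (-1) + ((1+c)/2) * 1) := by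
          simpa [smul_eq_mul, hm1, hp1] using this
      _ = φ c := by rw [← h3]
  simp only [hφ] at hkey
  linarith

lemma arccos_anti {x y : ℝ} (h : x ≤ y) : Real.arccos y ≤ Real.arccos x := by
  unfold Real.arccos
  exact sub_le_sub_left (Real.monotone_arcsin h) _

lemma sin_half_sq (x : ℝ) : Real.sin (x/2)^2 = (1 - Real.cos x)/2 := by
  have h1 := Real.cos_two_mul (x/2)
  have h2 := Real.sin_sq_add_cos_sq (x/2)
  have h3 : 2 * (x/2) = x := by ring
  rw [h3] at h1
  linarith

lemma key_lower {r s c : ℝ} (hr : 0 ≤ r) (hs : 0 ≤ s) (hrs : r + s ≤ π)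
    (hc1 : -1 ≤ c) (hc2 : c ≤ 1) :
    Real.arccos (Real.cos r * Real.cos s + Real.sin r * Real.sin s * c) ≤
      Real.sqrt (r^2 + s^2 - 2*r*s*c) := by
  set e := Real.sqrt (r^2 + s^2 - 2*r*s*c) with he
  have he0 : 0 ≤ e := Real.sqrt_nonneg _
  have heπ : e ≤ π := by
    have h1 : r^2 + s^2 - 2*r*s*c ≤ (r+s)^2 := by nlinarith [mul_nonneg hr hs]
    calc e ≤ Real.sqrt ((r+s)^2) := Real.sqrt_le_sqrt h1
      _ = r + s := Real.sqrt_sq (by linarith)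
      _ ≤ π := hrs
  have hcos := key_lower_cos hr hs hrs hc1 hc2
  calc Real.arccos (Real.cos r * Real.cos s + Real.sin r * Real.sin s * c)
      ≤ Real.arccos (Real.cos e) :=
        arccos_anti hcos
    _ = e := Real.arccos_cos he0 heπ

lemma star' {α t : ℝ} (hα₀ : 0 < α) (hα : α < π) (ht0 : 0 ≤ t) (ht : t ≤ α) :
    t ≤ (α / Real.sin α) * Real.sin t := by
  have hsα : 0 < Real.sin α := Real.sin_pos_of_pos_of_lt_pi hα₀ hα
  have := sin_star ht0 ht hα.le
  rw [div_mul_eq_mul_div, le_div_iff₀ hsα]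
  linarith

lemma key_upper {α r s c : ℝ} (hα₀ : 0 < α) (hα : α < π / 2)
    (hr0 : 0 ≤ r) (hrα : r ≤ α) (hs0 : 0 ≤ s) (hsα : s ≤ α)
    (hc1 : -1 ≤ c) (hc2 : c ≤ 1) :
    Real.sqrt (r^2 + s^2 - 2*r*s*c) ≤
      (α / Real.sin α) * Real.arccos (Real.cos r * Real.cos s + Real.sin r * Real.sin s * c) := by
  have hαπ : α < π := by linarith [Real.pi_pos]
  have hsinα : 0 < Real.sin α := Real.sin_pos_of_pos_of_lt_pi hα₀ hαπ
  set k := α / Real.sin α with hk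
  have hk0 : 0 < k := div_pos hα₀ hsinα
  set X := Real.cos r * Real.cos s + Real.sin r * Real.sin s * c with hX
  have hsinr : 0 ≤ Real.sin r := Real.sin_nonneg_of_nonneg_of_le_pi hr0 (by linarith)
  have hsins : 0 ≤ Real.sin s := Real.sin_nonneg_of_nonneg_of_le_pi hs0 (by linarith)
  have hX1 : -1 ≤ X := by
    have h := Real.neg_one_le_cos (r + s)
    rw [Real.cos_add] at h
    nlinarith [mul_nonneg hsinr hsins]
  have hX2 : X ≤ 1 := by
    have h := Real.cos_le_one (r - s)
    rw [Real.cos_sub] at h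
    nlinarith [mul_nonneg hsinr hsins]
  set d := Real.arccos X with hd
  have hd0 : 0 ≤ d := Real.arccos_nonneg _
  have hdπ : d ≤ π := Real.arccos_le_pi _
  have hcosd : Real.cos d = X := Real.cos_arccos hX1 hX2
  -- 2(1 - cos d) ≤ d^2
  have hd2 : 2 * (1 - Real.cos d) ≤ d^2 := by
    have hs1 : Real.sin (d/2) ≤ d/2 := Real.sin_le (by linarith)
    have hs0' : 0 ≤ Real.sin (d/2) := Real.sin_nonneg_of_nonneg_of_le_pi (by linarith) (by linarith)
    have hsq := sin_half_sq d
    nlinarith [hs1, hs0', hsq]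
  -- star inequalities
  have h2 : r ≤ k * Real.sin r := star' hα₀ hαπ hr0 hrα
  have h3 : s ≤ k * Real.sin s := star' hα₀ hαπ hs0 hsα
  have h1 : |r - s|/2 ≤ k * Real.sin (|r - s|/2) := by
    apply star' hα₀ hαπ (by positivity)
    rcases abs_cases (r - s) with ⟨h, _⟩ | ⟨h, _⟩ <;> rw [h] <;> linarith
  have hsinabs : Real.sin (|r-s|/2)^2 = Real.sin ((r-s)/2)^2 := by
    rcases abs_cases (r - s) with ⟨h, _⟩ | ⟨h, _⟩
    · rw [h]
    · rw [h, neg_div, Real.sin_neg, neg_sq]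
  have hq1 : (r - s)^2 ≤ 4 * k^2 * Real.sin ((r-s)/2)^2 := by
    have habs0 : 0 ≤ |r - s|/2 := by positivity
    have := sq_le_sq' (by linarith : -(k * Real.sin (|r-s|/2)) ≤ |r-s|/2) h1
    rw [mul_pow, hsinabs] at this
    have habs2 : (|r-s|/2)^2 = (r-s)^2/4 := by
      rw [div_pow, sq_abs]; norm_num
    rw [habs2] at this
    linarith
  have hq2 : 2*r*s*(1-c) ≤ 2*k^2*(Real.sin r * Real.sin s)*(1-c) := by
    have hrs : r * s ≤ k^2 * (Real.sin r * Real.sin s) := by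
      calc r * s ≤ (k * Real.sin r) * (k * Real.sin s) :=
            mul_le_mul h2 h3 hs0 (by positivity)
        _ = k^2 * (Real.sin r * Real.sin s) := by ring
    have h1c : (0:ℝ) ≤ 1 - c := by linarith
    have := mul_le_mul_of_nonneg_right hrs h1c
    linarith
  -- relate 1 - cos d to half-angle expression
  have hcosd2 : 2 * (1 - Real.cos d) =
      4 * Real.sin ((r-s)/2)^2 + 2 * (Real.sin r * Real.sin s) * (1 - c) := by
    rw [hcosd, hX]
    have h4 := sin_half_sq (r - s)
    rw [Real.cos_sub] at h4
    linarith [h4]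
  -- final chain
  have hE : r^2 + s^2 - 2*r*s*c ≤ (k*d)^2 := by
    have step1 : r^2 + s^2 - 2*r*s*c
        = (r-s)^2 + 2*r*s*(1-c) := by ring
    have step2 : (r-s)^2 + 2*r*s*(1-c)
        ≤ 4 * k^2 * Real.sin ((r-s)/2)^2 + 2*k^2*(Real.sin r * Real.sin s)*(1-c) := by
      linarith [hq1, hq2]
    have step3 : 4 * k^2 * Real.sin ((r-s)/2)^2 + 2*k^2*(Real.sin r * Real.sin s)*(1-c)
        = k^2 * (2 * (1 - Real.cos d)) := by linear_combination (-(k^2)) * hcosd2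
    have step4 : k^2 * (2 * (1 - Real.cos d)) ≤ k^2 * d^2 :=
      mul_le_mul_of_nonneg_left hd2 (sq_nonneg k)
    calc r^2 + s^2 - 2*r*s*c = (r-s)^2 + 2*r*s*(1-c) := step1
      _ ≤ 4 * k^2 * Real.sin ((r-s)/2)^2 + 2*k^2*(Real.sin r * Real.sin s)*(1-c) := step2
      _ = k^2 * (2 * (1 - Real.cos d)) := step3
      _ ≤ k^2 * d^2 := step4
      _ = (k*d)^2 := by ring
  calc Real.sqrt (r^2 + s^2 - 2*r*s*c) ≤ Real.sqrt ((k*d)^2) := Real.sqrt_le_sqrt hE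
    _ = k * d := Real.sqrt_sq (by positivity)

lemma inner_northPole (p : EuclideanSpace ℝ (Fin 3)) : ⟪p, northPole⟫ = p 2 := by
  simp [northPole, PiLp.inner_apply, Fin.sum_univ_three, WithLp.equiv_symm_apply, PiLp.toLp_apply]

lemma inner_three (p q : EuclideanSpace ℝ (Fin 3)) :
    ⟪p, q⟫ = p 0 * q 0 + p 1 * q 1 + p 2 * q 2 := by
  simp [PiLp.inner_apply, Fin.sum_univ_three, mul_comm]

lemma sum_sq_of_norm_one {p : EuclideanSpace ℝ (Fin 3)} (hp : ‖p‖ = 1) :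
    p 0 ^ 2 + p 1 ^ 2 + p 2 ^ 2 = 1 := by
  have := inner_three p p
  rw [real_inner_self_eq_norm_sq, hp] at this
  nlinarith [this]

lemma polarProj_apply (p : EuclideanSpace ℝ (Fin 3)) (i : Fin 2) :
    polarProj p i = (sphDist p northPole / Real.sqrt (1 - (p 2) ^ 2)) * ![p 0, p 1] i := by
  rw [polarProj, inner_northPole]
  simp [WithLp.equiv_symm_apply, PiLp.toLp_apply]

lemma dist_two (x y : EuclideanSpace ℝ (Fin 2)) :
    dist x y = Real.sqrt ((x 0 - y 0)^2 + (x 1 - y 1)^2) := by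
  rw [EuclideanSpace.dist_eq, Fin.sum_univ_two]
  norm_num [Real.dist_eq, sq_abs]

lemma norm_two' (x : EuclideanSpace ℝ (Fin 2)) :
    ‖x‖ = Real.sqrt ((x 0)^2 + (x 1)^2) := by
  rw [EuclideanSpace.norm_eq, Fin.sum_univ_two]
  norm_num [sq_abs]

lemma cap_facts {α : ℝ} (hα : α < π / 2) {p : EuclideanSpace ℝ (Fin 3)}
    (hp : ‖p‖ = 1) (hpα : sphDist p northPole ≤ α) :
    0 ≤ sphDist p northPole ∧
    Real.cos (sphDist p northPole) = p 2 ∧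
    Real.sin (sphDist p northPole) = Real.sqrt (1 - p 2 ^ 2) ∧
    p 0 ^ 2 + p 1 ^ 2 = Real.sin (sphDist p northPole) ^ 2 ∧
    (Real.sin (sphDist p northPole) = 0 →
      sphDist p northPole = 0 ∧ p 0 = 0 ∧ p 1 = 0) := by
  have hsum := sum_sq_of_norm_one hp
  have hdef : sphDist p northPole = Real.arccos (p 2) := by
    rw [sphDist, inner_northPole]
  have hp2a : -1 ≤ p 2 := by nlinarith [sq_nonneg (p 0), sq_nonneg (p 1), sq_nonneg (p 2 + 1)]
  have hp2b : p 2 ≤ 1 := by nlinarith [sq_nonneg (p 0), sq_nonneg (p 1), sq_nonneg (p 2 - 1)]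
  have hr0 : 0 ≤ sphDist p northPole := by rw [hdef]; exact Real.arccos_nonneg _
  have hcos : Real.cos (sphDist p northPole) = p 2 := by
    rw [hdef]; exact Real.cos_arccos hp2a hp2b
  have hsin : Real.sin (sphDist p northPole) = Real.sqrt (1 - p 2 ^ 2) := by
    rw [hdef]; exact Real.sin_arccos _
  have h1p2 : (0:ℝ) ≤ 1 - p 2 ^ 2 := by nlinarith
  have hsq : Real.sin (sphDist p northPole) ^ 2 = 1 - p 2 ^ 2 := by
    rw [hsin]; exact Real.sq_sqrt h1p2
  refine ⟨hr0, hcos, hsin, by linarith [hsq], fun hz => ?_⟩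
  have h0 : 1 - p 2 ^ 2 = 0 := by rw [hz] at hsq; linarith [hsq]
  have hπ2 : sphDist p northPole < π / 2 := lt_of_le_of_lt hpα hα
  have hcpos : 0 < Real.cos (sphDist p northPole) :=
    Real.cos_pos_of_mem_Ioo ⟨by linarith [Real.pi_pos], hπ2⟩
  have hp2 : p 2 = 1 := by nlinarith [hcos]
  have : sphDist p northPole = 0 := by
    rw [hdef, hp2, Real.arccos_one]
  exact ⟨this, by nlinarith [sq_nonneg (p 0), sq_nonneg (p 1)],
    by nlinarith [sq_nonneg (p 0), sq_nonneg (p 1)]⟩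

/-- Main reduction: the spherical and planar distances in terms of `r`, `s`, `c`. -/
lemma main_eq {α : ℝ} (hα : α < π / 2) {p q : EuclideanSpace ℝ (Fin 3)}
    (hp : ‖p‖ = 1) (hq : ‖q‖ = 1)
    (hpα : sphDist p northPole ≤ α) (hqα : sphDist q northPole ≤ α) :
    ∃ c : ℝ, -1 ≤ c ∧ c ≤ 1 ∧
      sphDist p q = Real.arccos (Real.cos (sphDist p northPole) * Real.cos (sphDist q northPole)
        + Real.sin (sphDist p northPole) * Real.sin (sphDist q northPole) * c) ∧
      dist (polarProj p) (polarProj q) =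
        Real.sqrt ((sphDist p northPole)^2 + (sphDist q northPole)^2
          - 2 * (sphDist p northPole) * (sphDist q northPole) * c) := by
  obtain ⟨hr0, hcosr, hsinr, hpsum, hdegp⟩ := cap_facts hα hp hpα
  obtain ⟨hs0, hcoss, hsins, hqsum, hdegq⟩ := cap_facts hα hq hqα
  set r := sphDist p northPole with hrdef
  set s := sphDist q northPole with hsdef
  have hsinr0 : 0 ≤ Real.sin r :=
    Real.sin_nonneg_of_nonneg_of_le_pi hr0 (by nlinarith [Real.pi_pos, hα, hpα])
  have hsins0 : 0 ≤ Real.sin s :=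
    Real.sin_nonneg_of_nonneg_of_le_pi hs0 (by nlinarith [Real.pi_pos, hα, hqα])
  set X := p 0 * q 0 + p 1 * q 1 with hXdef
  set c : ℝ := if Real.sin r * Real.sin s = 0 then 0 else X / (Real.sin r * Real.sin s) with hcdef
  -- facts about degenerate / nondegenerate cases
  have hXc : X = Real.sin r * Real.sin s * c := by
    by_cases h : Real.sin r * Real.sin s = 0
    · rw [hcdef, if_pos h, mul_zero]
      rcases mul_eq_zero.1 h with h' | h'
      · obtain ⟨-, h1, h2⟩ := hdegp h'
        rw [hXdef, h1, h2]; ring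
      · obtain ⟨-, h1, h2⟩ := hdegq h'
        rw [hXdef, h1, h2]; ring
    · rw [hcdef, if_neg h]; field_simp
      rw [mul_assoc, mul_div_assoc, div_self h, mul_one]
  have hCS : X^2 ≤ (Real.sin r * Real.sin s)^2 := by
    have hX2 : X^2 = (p 0 * q 0 + p 1 * q 1)^2 := by rw [hXdef]
    have h1 : X^2 ≤ (p 0^2 + p 1^2) * (q 0^2 + q 1^2) := by
      rw [hX2]; nlinarith [sq_nonneg (p 0 * q 1 - p 1 * q 0)]
    calc X^2 ≤ (p 0^2 + p 1^2) * (q 0^2 + q 1^2) := h1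
      _ = (Real.sin r * Real.sin s)^2 := by rw [hpsum, hqsum]; ring
  have hc1 : -1 ≤ c ∧ c ≤ 1 := by
    by_cases h : Real.sin r * Real.sin s = 0
    · rw [hcdef, if_pos h]; norm_num
    · have hpos : 0 < Real.sin r * Real.sin s :=
        lt_of_le_of_ne (mul_nonneg hsinr0 hsins0) (Ne.symm h)
      rw [hcdef, if_neg h]
      constructor
      · rw [le_div_iff₀ hpos]; nlinarith [hCS]
      · rw [div_le_one hpos]; nlinarith [hCS]
  refine ⟨c, hc1.1, hc1.2, ?_, ?_⟩
  · -- spherical distance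
    rw [sphDist, inner_three, ← hXc, hcosr, hcoss]
    rw [hXdef]; ring_nf
  · -- planar distance
    have hscalarp : ∀ i, polarProj p i = (r / Real.sin r) * ![p 0, p 1] i := by
      intro i; rw [polarProj_apply, ← hrdef, ← hsinr]
    have hscalarq : ∀ i, polarProj q i = (s / Real.sin s) * ![q 0, q 1] i := by
      intro i; rw [polarProj_apply, ← hsdef, ← hsins]
    have hF1 : (r / Real.sin r)^2 * (p 0^2 + p 1^2) = r^2 := by
      by_cases hz : Real.sin r = 0
      · obtain ⟨h0, h1, h2⟩ := hdegp hz
        rw [h1, h2, h0]; norm_num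
      · rw [hpsum, div_pow, div_mul_cancel₀ _ (pow_ne_zero 2 hz)]
    have hF2 : (s / Real.sin s)^2 * (q 0^2 + q 1^2) = s^2 := by
      by_cases hz : Real.sin s = 0
      · obtain ⟨h0, h1, h2⟩ := hdegq hz
        rw [h1, h2, h0]; norm_num
      · rw [hqsum, div_pow, div_mul_cancel₀ _ (pow_ne_zero 2 hz)]
    have hF3 : (r / Real.sin r) * (s / Real.sin s) * X = r * s * c := by
      by_cases hz : Real.sin r * Real.sin s = 0
      · rcases mul_eq_zero.1 hz with h | h
        · obtain ⟨h0, -, -⟩ := hdegp h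
          rw [hXc, h, h0]; simp
        · obtain ⟨h0, -, -⟩ := hdegq h
          rw [hXc, h, h0]; simp
      · have h1 : Real.sin r ≠ 0 := fun h => hz (by rw [h, zero_mul])
        have h2 : Real.sin s ≠ 0 := fun h => hz (by rw [h, mul_zero])
        rw [hXc]; field_simp
    rw [dist_two, hscalarp 0, hscalarp 1, hscalarq 0, hscalarq 1]
    simp only [Matrix.cons_val_zero, Matrix.cons_val_one, Matrix.head_cons]
    congr 1
    linear_combination hF1 + hF2 - 2 * hF3
      - 2 * ((r / Real.sin r) * (s / Real.sin s)) * hXdef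

lemma norm_polarProj {α : ℝ} (hα : α < π / 2) {p : EuclideanSpace ℝ (Fin 3)}
    (hp : ‖p‖ = 1) (hpα : sphDist p northPole ≤ α) :
    ‖polarProj p‖ = sphDist p northPole := by
  obtain ⟨hr0, hcosr, hsinr, hpsum, hdegp⟩ := cap_facts hα hp hpα
  set r := sphDist p northPole with hrdef
  have hscalar : ∀ i, polarProj p i = (r / Real.sin r) * ![p 0, p 1] i := by
    intro i; rw [polarProj_apply, ← hrdef, ← hsinr]
  have hF1 : (r / Real.sin r)^2 * (p 0^2 + p 1^2) = r^2 := by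
    by_cases hz : Real.sin r = 0
    · obtain ⟨h0, h1, h2⟩ := hdegp hz
      rw [h1, h2, h0]; norm_num
    · rw [hpsum, div_pow, div_mul_cancel₀ _ (pow_ne_zero 2 hz)]
  rw [norm_two', hscalar 0, hscalar 1]
  simp only [Matrix.cons_val_zero, Matrix.cons_val_one, Matrix.head_cons]
  rw [show (r / Real.sin r * p 0)^2 + (r / Real.sin r * p 1)^2
      = (r / Real.sin r)^2 * (p 0^2 + p 1^2) by ring, hF1, Real.sqrt_sq hr0]

/-- The inverse of the polar projection, for surjectivity. -/
noncomputable def polarInv (x : EuclideanSpace ℝ (Fin 2)) : EuclideanSpace ℝ (Fin 3) :=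
  (WithLp.equiv 2 (Fin 3 → ℝ)).symm
    ![(Real.sin ‖x‖ / ‖x‖) * x 0, (Real.sin ‖x‖ / ‖x‖) * x 1, Real.cos ‖x‖]

lemma polarInv_spec {α : ℝ} (hα₀ : 0 < α) (hα : α < π / 2)
    {x : EuclideanSpace ℝ (Fin 2)} (hx : ‖x‖ ≤ α) :
    ‖polarInv x‖ = 1 ∧ sphDist (polarInv x) northPole = ‖x‖ ∧ polarProj (polarInv x) = x := by
  set ρ := ‖x‖ with hρdef
  have hρ0 : 0 ≤ ρ := norm_nonneg x
  have hρπ : ρ < π / 2 := lt_of_le_of_lt hx hα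
  have hxsum : x 0 ^ 2 + x 1 ^ 2 = ρ ^ 2 := by
    have h := norm_two' x
    rw [← hρdef] at h
    have h2 : ρ^2 = (Real.sqrt (x 0 ^ 2 + x 1 ^ 2))^2 := by rw [← h]
    rw [h2, Real.sq_sqrt (by positivity)]
  have hcoords : ∀ i : Fin 3, polarInv x i =
      ![(Real.sin ρ / ρ) * x 0, (Real.sin ρ / ρ) * x 1, Real.cos ρ] i := by
    intro i; rw [polarInv]; simp [WithLp.equiv_symm_apply, PiLp.toLp_apply, ← hρdef]
  have h0 := hcoords 0; have h1 := hcoords 1; have h2 := hcoords 2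
  simp only [Matrix.cons_val_zero, Matrix.cons_val_one, Matrix.head_cons,
    Matrix.cons_val_two, Matrix.tail_cons] at h0 h1 h2
  have hsq : (polarInv x 0)^2 + (polarInv x 1)^2 + (polarInv x 2)^2 = 1 := by
    rw [h0, h1, h2]
    rcases eq_or_lt_of_le hρ0 with hz | hz
    · simp [← hz]
    · have : (Real.sin ρ / ρ)^2 * (x 0^2 + x 1^2) = Real.sin ρ ^ 2 := by
        rw [hxsum, div_pow, div_mul_cancel₀ _ (pow_ne_zero 2 hz.ne')]
      nlinarith [Real.sin_sq_add_cos_sq ρ, this]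
  have hnorm : ‖polarInv x‖ = 1 := by
    have := EuclideanSpace.norm_eq (polarInv x)
    rw [Fin.sum_univ_three] at this
    rw [this]
    simp only [Real.norm_eq_abs, sq_abs]
    rw [hsq]
    exact Real.sqrt_one
  have hdist : sphDist (polarInv x) northPole = ρ := by
    rw [sphDist, inner_northPole, h2, Real.arccos_cos hρ0 (by linarith [Real.pi_pos])]
  refine ⟨hnorm, hdist, ?_⟩
  have hsinρ : Real.sqrt (1 - (polarInv x 2)^2) = Real.sin ρ := by
    rw [h2, ← Real.sin_sq_add_cos_sq ρ]
    rw [show Real.sin ρ^2 + Real.cos ρ^2 - Real.cos ρ^2 = Real.sin ρ^2 by ring,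
      Real.sqrt_sq (Real.sin_nonneg_of_nonneg_of_le_pi hρ0 (by linarith [Real.pi_pos]))]
  have hxi : ∀ y : ℝ, (ρ / Real.sin ρ) * (Real.sin ρ / ρ * y) = y ∨ x = 0 := by
    intro y
    rcases eq_or_lt_of_le hρ0 with hz | hz
    · exact Or.inr (norm_eq_zero.mp hz.symm)
    · have hsρ : Real.sin ρ ≠ 0 :=
        (Real.sin_pos_of_pos_of_lt_pi hz (by linarith [Real.pi_pos])).ne'
      left; field_simp
  ext i
  rw [polarProj_apply, hdist, hsinρ]
  rcases hxi 0 with hgen | hx0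
  · fin_cases i <;>
      simp only [Matrix.cons_val_zero, Matrix.cons_val_one, Matrix.head_cons]
    · rw [h0]
      rcases hxi (x 0) with h | hx0
      · exact h
      · rw [hx0]; simp
    · rw [h1]
      rcases hxi (x 1) with h | hx0
      · exact h
      · rw [hx0]; simp
  · have hx00 : x 0 = 0 := by rw [hx0]; rfl
    have hx10 : x 1 = 0 := by rw [hx0]; rfl
    fin_cases i <;>
      simp only [Matrix.cons_val_zero, Matrix.cons_val_one, Matrix.head_cons] <;>
      [rw [h0, hx00]; rw [h1, hx10]] <;> simp [hx00, hx10]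

/-- For `0 < α < π/2`, the polar projection from the spherical cap of angular radius
`α` on the unit sphere is a bijection onto the disc of radius `α` that does not
decrease distances and increases them by a factor at most `α / sin α`; i.e., it is a
`(1, α / sin α)`-bi-Lipschitz map (spherical distance on the cap, Euclidean in the
plane). -/
theorem stmt_12 (α : ℝ) (hα₀ : 0 < α) (hα : α < π / 2) :
    Set.BijOn polarProj
        {p : EuclideanSpace ℝ (Fin 3) | p ∈ Metric.sphere (0 : EuclideanSpace ℝ (Fin 3)) 1
          ∧ sphDist p northPole ≤ α}
        (Metric.closedBall (0 : EuclideanSpace ℝ (Fin 2)) α) ∧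
      ∀ p ∈ {p : EuclideanSpace ℝ (Fin 3) |
          p ∈ Metric.sphere (0 : EuclideanSpace ℝ (Fin 3)) 1 ∧ sphDist p northPole ≤ α},
      ∀ q ∈ {p : EuclideanSpace ℝ (Fin 3) |
          p ∈ Metric.sphere (0 : EuclideanSpace ℝ (Fin 3)) 1 ∧ sphDist p northPole ≤ α},
        sphDist p q ≤ dist (polarProj p) (polarProj q) ∧
          dist (polarProj p) (polarProj q) ≤ (α / Real.sin α) * sphDist p q := by
  have hineq : ∀ p, ‖p‖ = 1 → sphDist p northPole ≤ α →
      ∀ q, ‖q‖ = 1 → sphDist q northPole ≤ α →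
      sphDist p q ≤ dist (polarProj p) (polarProj q) ∧
        dist (polarProj p) (polarProj q) ≤ (α / Real.sin α) * sphDist p q := by
    intro p hp1 hpα q hq1 hqα
    obtain ⟨c, hc1, hc2, hsph, hdist⟩ := main_eq hα hp1 hq1 hpα hqα
    have hr0 : 0 ≤ sphDist p northPole := Real.arccos_nonneg _
    have hs0 : 0 ≤ sphDist q northPole := Real.arccos_nonneg _
    have hπ : (0:ℝ) < π := Real.pi_pos
    constructor
    · rw [hsph, hdist]
      exact key_lower hr0 hs0 (by linarith) hc1 hc2
    · rw [hsph, hdist]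
      exact key_upper hα₀ hα hr0 hpα hs0 hqα hc1 hc2
  constructor
  · refine ⟨?_, ?_, ?_⟩
    · intro p hp
      obtain ⟨hp1, hpα⟩ := hp
      rw [mem_sphere_zero_iff_norm] at hp1
      rw [Metric.mem_closedBall, dist_zero_right, norm_polarProj hα hp1 hpα]
      exact hpα
    · intro p hp q hq hfeq
      obtain ⟨hp1, hpα⟩ := hp
      obtain ⟨hq1, hqα⟩ := hq
      rw [mem_sphere_zero_iff_norm] at hp1 hq1
      have h1 := (hineq p hp1 hpα q hq1 hqα).1
      rw [hfeq, dist_self] at h1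
      have h2 : sphDist p q = 0 := le_antisymm h1 (Real.arccos_nonneg _)
      rw [sphDist] at h2
      have h3 : (1:ℝ) ≤ ⟪p, q⟫ := Real.arccos_eq_zero.mp h2
      have h4 : ⟪p, q⟫ ≤ 1 := by
        calc ⟪p, q⟫ ≤ ‖p‖ * ‖q‖ := real_inner_le_norm p q
          _ = 1 := by rw [hp1, hq1]; ring
      exact (inner_eq_one_iff_of_norm_eq_one hp1 hq1).mp (le_antisymm h4 h3)
    · intro x hx
      rw [Metric.mem_closedBall, dist_zero_right] at hx
      obtain ⟨h1, h2, h3⟩ := polarInv_spec hα₀ hα hx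
      refine ⟨polarInv x, ⟨mem_sphere_zero_iff_norm.mpr h1, ?_⟩, h3⟩
      rw [h2]; exact hx
  · intro p hp q hq
    obtain ⟨hp1, hpα⟩ := hp
    obtain ⟨hq1, hqα⟩ := hq
    rw [mem_sphere_zero_iff_norm] at hp1 hq1
    exact hineq p hp1 hpα q hq1 hqα
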